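/- arXiv:2505.06163 — 7 statements merged into one kernel-verified Lean document; each statement's English description precedes it below -/
import Mathlib

section
/- For every finite set N of agents, every symmetric valuation v on N, and every partition π of N, there exists a matching μ of N (a partition of N into parts of size at most 2) such that SW(π) ≤ 2·SW(μ). In particular, a maximum weight matching is a 1/2-approximation of the maximum social welfare in symmetric fractional hedonic games. -/
open Finset

/-- Social welfare of a coalition `C` in a fractional hedonic game with valuation `v`:
`SW(C) = (Σ_{i∈C} Σ_{j∈C, j≠i} v i j) / |C|`. -/
noncomputable def coalSW {α : Type*} [DecidableEq α] (v : α → α → ℝ) (C : Finset α) : ℝ :=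
  (∑ i ∈ C, ∑ j ∈ C.erase i, v i j) / (C.card : ℝ)

/-- Social welfare of a partition: the sum of the social welfares of its parts. -/
noncomputable def partSW {α : Type*} [DecidableEq α] (v : α → α → ℝ) {N : Finset α}
    (π : Finpartition N) : ℝ :=
  ∑ C ∈ π.parts, coalSW v C

/-- A matching is a partition all of whose parts have at most 2 elements.
For a symmetric valuation with zero diagonal, the social welfare of a matching
(as a partition) equals the sum of `v i j` over its two-element parts `{i, j}`. -/
def IsMatching {α : Type*} [DecidableEq α] {N : Finset α} (π : Finpartition N) : Prop :=
  ∀ p ∈ π.parts, p.card ≤ 2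

/-! ### Auxiliary definitions and lemmas -/

/-- The (ordered) total weight of a finite set. -/
noncomputable def Wf {α : Type*} [DecidableEq α] (v : α → α → ℝ) (S : Finset α) : ℝ :=
  ∑ i ∈ S, ∑ j ∈ S.erase i, v i j

lemma coalSW_eq_Wf {α : Type*} [DecidableEq α] (v : α → α → ℝ) (S : Finset α) :
    coalSW v S = Wf v S / (S.card : ℝ) := rfl

lemma Wf_erase {α : Type*} [DecidableEq α] (v : α → α → ℝ) {S : Finset α} {i : α} (hi : i ∈ S) :
    Wf v (S.erase i) = Wf v S - (∑ j ∈ S.erase i, v i j) - (∑ j ∈ S.erase i, v j i) := by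
  have h1 : Wf v S = (∑ j ∈ S.erase i, v i j) + ∑ a ∈ S.erase i, ∑ b ∈ S.erase a, v a b := by
    rw [Wf, ← Finset.add_sum_erase _ _ hi]
  have h2 : ∀ a ∈ S.erase i, (∑ b ∈ S.erase a, v a b)
      = v a i + ∑ b ∈ (S.erase i).erase a, v a b := by
    intro a ha
    have hai : a ≠ i := (Finset.mem_erase.1 ha).1
    have hiS : i ∈ S.erase a := Finset.mem_erase.2 ⟨fun h => hai h.symm, hi⟩
    rw [← Finset.add_sum_erase _ _ hiS, Finset.erase_right_comm]
  rw [h1, Finset.sum_congr rfl h2, Finset.sum_add_distrib, Wf]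
  have h3 : ∑ a ∈ S.erase i, v a i = ∑ a ∈ S.erase i, v a i := rfl
  ring

lemma coalSW_singleton {α : Type*} [DecidableEq α] (v : α → α → ℝ) (i : α) :
    coalSW v {i} = 0 := by
  simp [coalSW]

lemma coalSW_pair {α : Type*} [DecidableEq α] (v : α → α → ℝ)
    (hsymm : ∀ i j, v i j = v j i) {i j : α} (hij : i ≠ j) :
    coalSW v {i, j} = v i j := by
  have h1 : ({i, j} : Finset α).erase i = {j} := by
    rw [Finset.erase_insert (by simp [hij])]
  have h2 : ({i, j} : Finset α).erase j = {i} := by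
    rw [Finset.pair_comm, Finset.erase_insert (by simp [hij.symm])]
  rw [coalSW, Finset.sum_pair hij, h1, h2, Finset.sum_singleton, Finset.sum_singleton,
    Finset.card_pair hij, hsymm j i]
  push_cast
  ring

/-- Key per-coalition lemma: every finite set has a matching whose welfare is at least
half the coalition's social welfare. -/
lemma key_lemma {α : Type*} [DecidableEq α] (v : α → α → ℝ)
    (hsymm : ∀ i j, v i j = v j i) (hdiag : ∀ i, v i i = 0) :
    ∀ (n : ℕ) (S : Finset α), S.card ≤ n →
      ∃ μ : Finpartition S, IsMatching μ ∧ coalSW v S ≤ 2 * partSW v μ := by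
  intro n
  induction n with
  | zero =>
    intro S hS
    have hS0 : S = ∅ := Finset.card_eq_zero.1 (Nat.le_zero.1 hS)
    subst hS0
    refine ⟨(Finpartition.empty (Finset α)).copy rfl, ?_, ?_⟩
    · intro p hp; simp [Finpartition.copy, Finpartition.empty] at hp
    · simp [partSW, Finpartition.copy, Finpartition.empty, coalSW]
  | succ n ih =>
    intro S hS
    by_cases h3 : 3 ≤ S.card
    swap
    · -- small cases: card ≤ 2
      interval_cases h : S.card
      · -- card 0
        have hS0 : S = ∅ := Finset.card_eq_zero.1 h
        subst hS0
        refine ⟨(Finpartition.empty (Finset α)).copy rfl, ?_, ?_⟩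
        · intro p hp; simp [Finpartition.copy, Finpartition.empty] at hp
        · simp [partSW, Finpartition.copy, Finpartition.empty, coalSW]
      · -- card 1
        obtain ⟨i, rfl⟩ := Finset.card_eq_one.1 h
        refine ⟨Finpartition.indiscrete (by simp), ?_, ?_⟩
        · intro p hp
          simp only [Finpartition.indiscrete_parts, Finset.mem_singleton] at hp
          simp [hp]
        · simp [partSW, Finpartition.indiscrete_parts, coalSW_singleton]
      · -- card 2
        obtain ⟨i, j, hij, rfl⟩ := Finset.card_eq_two.1 h
        by_cases hpos : 0 ≤ v i j
        · refine ⟨Finpartition.indiscrete (by simp), ?_, ?_⟩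
          · intro p hp
            simp only [Finpartition.indiscrete_parts, Finset.mem_singleton] at hp
            rw [hp, Finset.card_pair hij]
          · rw [partSW]
            simp only [Finpartition.indiscrete_parts, Finset.sum_singleton]
            rw [coalSW_pair v hsymm hij]
            linarith
        · -- split into singletons
          have hdisj : Disjoint ({j} : Finset α) ({i} : Finset α) :=
            Finset.disjoint_singleton.2 hij.symm
          have hsup : ({j} : Finset α) ⊔ ({i} : Finset α) = {i, j} := by
            rw [Finset.sup_eq_union]
            ext a; simp [or_comm]
          refine ⟨(Finpartition.indiscrete (by simp : ({j} : Finset α) ≠ ⊥)).extend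
            (by simp : ({i} : Finset α) ≠ ⊥) hdisj hsup, ?_, ?_⟩
          · intro p hp
            simp only [Finpartition.extend_parts, Finpartition.indiscrete_parts,
              Finset.mem_insert, Finset.mem_singleton] at hp
            rcases hp with rfl | rfl <;> simp
          · rw [partSW]
            simp only [Finpartition.extend_parts, Finpartition.indiscrete_parts]
            rw [Finset.sum_insert (by simp [Finset.singleton_injective.ne hij])]
            rw [Finset.sum_singleton, coalSW_singleton, coalSW_singleton,
              coalSW_pair v hsymm hij]
            linarith
    · -- main inductive step: card ≥ 3, averaging argument
      set m : ℝ := (S.card : ℝ) with hm_def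
      have hm3 : (3 : ℝ) ≤ m := by rw [hm_def]; exact_mod_cast h3
      have hm0 : m ≠ 0 := by linarith
      have hm2 : (0 : ℝ) < m - 2 := by linarith
      set A : ℝ := Wf v S with hA_def
      set d : α → ℝ := fun x => ∑ y ∈ S.erase x, v x y with hd_def
      have hsum_d : ∑ x ∈ S, d x = A := rfl
      have hcard_er : ∀ i ∈ S, (((S.erase i).card : ℕ) : ℝ) = m - 1 := by
        intro i hi
        rw [Finset.card_erase_of_mem hi]
        have h1 : 1 ≤ S.card := by omega
        push_cast [Nat.cast_sub h1]
        ring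
      -- value of Wf after erasing two points
      have hWf2 : ∀ i ∈ S, ∀ j ∈ S.erase i,
          Wf v ((S.erase i).erase j) = A - 2 * d i - 2 * d j + 2 * v i j := by
        intro i hi j hj
        have hji : j ≠ i := (Finset.mem_erase.1 hj).1
        have hjS : j ∈ S := (Finset.mem_erase.1 hj).2
        have hiSj : i ∈ S.erase j := Finset.mem_erase.2 ⟨fun h => hji h.symm, hi⟩
        have e1 : Wf v (S.erase i) = A - 2 * d i := by
          rw [Wf_erase v hi]
          have : ∑ y ∈ S.erase i, v y i = ∑ y ∈ S.erase i, v i y :=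
            Finset.sum_congr rfl fun y _ => hsymm y i
          rw [this]; simp only [hd_def]; ring
        have e2a : ∑ k ∈ (S.erase i).erase j, v j k = d j - v j i := by
          rw [Finset.erase_right_comm, Finset.sum_erase_eq_sub hiSj]
        have e2b : ∑ k ∈ (S.erase i).erase j, v k j = d j - v j i := by
          have : ∑ k ∈ (S.erase i).erase j, v k j = ∑ k ∈ (S.erase i).erase j, v j k :=
            Finset.sum_congr rfl fun k _ => hsymm k j
          rw [this, e2a]
        rw [Wf_erase v hj, e2a, e2b, e1, hsymm j i]
        ring
      -- averaging over ordered pairs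
      have havg : ∃ i ∈ S, ∃ j ∈ S.erase i,
          (m - 2) * (A / m) ≤ (m - 2) * 2 * v i j + Wf v ((S.erase i).erase j) := by
        set T := S.sigma (fun i => S.erase i) with hT_def
        have hTne : T.Nonempty := by
          obtain ⟨i, hi⟩ := Finset.card_pos.1 (by omega : 0 < S.card)
          have : 0 < (S.erase i).card := by
            rw [Finset.card_erase_of_mem hi]; omega
          obtain ⟨j, hj⟩ := Finset.card_pos.1 this
          exact ⟨⟨i, j⟩, Finset.mem_sigma.2 ⟨hi, hj⟩⟩
        have hLHS : ∑ _p ∈ T, (m - 2) * (A / m) = (m - 1) * (m - 2) * A := by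
          rw [Finset.sum_const, nsmul_eq_mul, hT_def, Finset.card_sigma]
          push_cast
          rw [Finset.sum_congr rfl hcard_er, Finset.sum_const, nsmul_eq_mul]
          field_simp
          ring
        have hRHS : ∑ p ∈ T, ((m - 2) * 2 * v p.1 p.2 + Wf v ((S.erase p.1).erase p.2))
            = (m - 1) * (m - 2) * A := by
          rw [hT_def, Finset.sum_sigma]
          have hinner : ∀ i ∈ S, ∑ j ∈ S.erase i,
              ((m - 2) * 2 * v i j + Wf v ((S.erase i).erase j))
              = (m - 2) * 2 * d i + ((m - 1) * A - 2 * (m - 1) * d i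
                  - 2 * (A - d i) + 2 * d i) := by
            intro i hi
            have step : ∀ j ∈ S.erase i,
                (m - 2) * 2 * v i j + Wf v ((S.erase i).erase j)
                = (m - 2) * 2 * v i j + (A - 2 * d i - 2 * d j + 2 * v i j) := by
              intro j hj; rw [hWf2 i hi j hj]
            rw [Finset.sum_congr rfl step]
            rw [Finset.sum_add_distrib]
            have t1 : ∑ j ∈ S.erase i, (m - 2) * 2 * v i j = (m - 2) * 2 * d i := by
              rw [← Finset.mul_sum]
            have t2 : ∑ j ∈ S.erase i, (A - 2 * d i - 2 * d j + 2 * v i j)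
                = (m - 1) * A - 2 * (m - 1) * d i - 2 * (A - d i) + 2 * d i := by
              have e1 : ∑ j ∈ S.erase i, (A - 2 * d i - 2 * d j + 2 * v i j)
                  = (∑ _j ∈ S.erase i, (A - 2 * d i)) - 2 * (∑ j ∈ S.erase i, d j)
                    + 2 * (∑ j ∈ S.erase i, v i j) := by
                rw [Finset.mul_sum, Finset.mul_sum, ← Finset.sum_sub_distrib,
                  ← Finset.sum_add_distrib]
              have e2 : ∑ j ∈ S.erase i, d j = A - d i := by
                rw [Finset.sum_erase_eq_sub hi, hsum_d]
              rw [e1, e2, Finset.sum_const, nsmul_eq_mul, hcard_er i hi]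
              simp only [hd_def]
              ring
            rw [t1, t2]
          rw [Finset.sum_congr rfl hinner]
          have e1 : ∑ i ∈ S, ((m - 2) * 2 * d i + ((m - 1) * A - 2 * (m - 1) * d i
              - 2 * (A - d i) + 2 * d i))
              = ∑ i ∈ S, (((m - 1) * A - 2 * A) + ((m - 2) * 2 - 2 * (m - 1) + 2 + 2) * d i)
              := by
            apply Finset.sum_congr rfl; intro i _; ring
          rw [e1, Finset.sum_add_distrib, Finset.sum_const, nsmul_eq_mul,
            ← Finset.mul_sum, hsum_d, ← hm_def]
          ring
        have hle : ∑ _p ∈ T, (m - 2) * (A / m)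
            ≤ ∑ p ∈ T, ((m - 2) * 2 * v p.1 p.2 + Wf v ((S.erase p.1).erase p.2)) := by
          rw [hLHS, hRHS]
        obtain ⟨p, hp, hple⟩ := Finset.exists_le_of_sum_le hTne hle
        obtain ⟨hp1, hp2⟩ := Finset.mem_sigma.1 hp
        exact ⟨p.1, hp1, p.2, hp2, hple⟩
      obtain ⟨i, hi, j, hj, hpair⟩ := havg
      have hji : j ≠ i := (Finset.mem_erase.1 hj).1
      have hjS : j ∈ S := (Finset.mem_erase.1 hj).2
      set S' : Finset α := (S.erase i).erase j with hS'_def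
      have hS'card : S'.card = S.card - 2 := by
        rw [hS'_def, Finset.card_erase_of_mem hj, Finset.card_erase_of_mem hi]
        omega
      have hS'cast : ((S'.card : ℕ) : ℝ) = m - 2 := by
        rw [hS'card]
        have : 2 ≤ S.card := by omega
        push_cast [Nat.cast_sub this]
        ring
      have hS'le : S'.card ≤ n := by omega
      obtain ⟨μ', hμ'match, hμ'sw⟩ := ih S' hS'le
      -- build the matching on S
      have hiS' : i ∉ S' := by simp [hS'_def]
      have hjS' : j ∉ S' := by simp [hS'_def]
      have hbne : ({i, j} : Finset α) ≠ ⊥ := by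
        simp [Finset.bot_eq_empty, Finset.insert_ne_empty]
      have hdisj : Disjoint S' ({i, j} : Finset α) := by
        rw [Finset.disjoint_right]
        intro a ha
        rcases Finset.mem_insert.1 ha with rfl | ha'
        · exact hiS'
        · rw [Finset.mem_singleton] at ha'; subst ha'; exact hjS'
      have hsup : S' ⊔ ({i, j} : Finset α) = S := by
        rw [Finset.sup_eq_union]
        ext a
        simp only [Finset.mem_union, hS'_def, Finset.mem_erase, Finset.mem_insert,
          Finset.mem_singleton]
        constructor
        · rintro (⟨_, _, ha⟩ | rfl | rfl) <;> first | exact ‹a ∈ S› | exact hi | exact hjS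
        · intro ha
          by_cases hai : a = i
          · exact Or.inr (Or.inl hai)
          · by_cases haj : a = j
            · exact Or.inr (Or.inr haj)
            · exact Or.inl ⟨haj, hai, ha⟩
      refine ⟨μ'.extend hbne hdisj hsup, ?_, ?_⟩
      · intro p hp
        simp only [Finpartition.extend_parts, Finset.mem_insert] at hp
        rcases hp with rfl | hp
        · rw [Finset.card_pair (Ne.symm hji)]
        · exact hμ'match p hp
      · have hnotmem : ({i, j} : Finset α) ∉ μ'.parts := by
          intro hmem
          have : ({i, j} : Finset α) ⊆ S' := μ'.le hmem
          exact hiS' (this (Finset.mem_insert_self i {j}))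
        rw [partSW]
        simp only [Finpartition.extend_parts]
        rw [Finset.sum_insert hnotmem, coalSW_pair v hsymm (Ne.symm hji)]
        -- now combine hpair with the inductive hypothesis
        have hW' : Wf v S' = (m - 2) * coalSW v S' := by
          rw [coalSW_eq_Wf, hS'cast]
          field_simp
        have hIH' : Wf v S' ≤ (m - 2) * (2 * partSW v μ') := by
          rw [hW']
          exact mul_le_mul_of_nonneg_left hμ'sw (le_of_lt hm2)
        have hfinal : (m - 2) * (A / m)
            ≤ (m - 2) * (2 * (v i j + partSW v μ')) := by
          calc (m - 2) * (A / m) ≤ (m - 2) * 2 * v i j + Wf v S' := hpair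
            _ ≤ (m - 2) * 2 * v i j + (m - 2) * (2 * partSW v μ') := by linarith
            _ = (m - 2) * (2 * (v i j + partSW v μ')) := by ring
        have := le_of_mul_le_mul_left (by linarith [hfinal] : (m - 2) * (A / m) ≤ (m - 2) * (2 * (v i j + partSW v μ'))) hm2
        have hps : ∑ C ∈ μ'.parts, coalSW v C = partSW v μ' := rfl
        rw [coalSW_eq_Wf, ← hm_def, ← hA_def]
        linarith

/-- For every finite agent set `N`, symmetric valuation `v`, and partition `π` of `N`,
there is a matching `μ` of `N` with `SW(π) ≤ 2·SW(μ)`; in particular a maximum weight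
matching is a `1/2`-approximation of the maximum social welfare. -/
theorem stmt0 {α : Type*} [DecidableEq α] (N : Finset α) (v : α → α → ℝ)
    (hsymm : ∀ i j, v i j = v j i) (hdiag : ∀ i, v i i = 0)
    (π : Finpartition N) :
    ∃ μ : Finpartition N, IsMatching μ ∧ partSW v π ≤ 2 * partSW v μ := by
  have hex : ∀ C : Finset α, ∃ μC : Finpartition C,
      IsMatching μC ∧ coalSW v C ≤ 2 * partSW v μC :=
    fun C => key_lemma v hsymm hdiag C.card C le_rfl
  choose Q hQmatch hQsw using hex
  refine ⟨π.bind (fun C _ => Q C), ?_, ?_⟩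
  · intro p hp
    rw [Finpartition.mem_bind] at hp
    obtain ⟨A, hA, hpA⟩ := hp
    exact hQmatch A p hpA
  · have hdisjparts : ∀ x ∈ π.parts.attach, ∀ y ∈ π.parts.attach, x ≠ y →
        Disjoint (Q x.1).parts (Q y.1).parts := by
      rintro ⟨A, hA⟩ - ⟨B, hB⟩ - hne
      rw [Finset.disjoint_left]
      intro p hpA hpB
      have hAB : A ≠ B := fun h => hne (by simp [h])
      have h1 : p ⊆ A := (Q A).le hpA
      have h2 : p ⊆ B := (Q B).le hpB
      have hpne : p ≠ ∅ := (Q A).ne_bot hpA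
      obtain ⟨a, ha⟩ := Finset.nonempty_iff_ne_empty.2 hpne
      exact (Finset.disjoint_left.1 (π.disjoint hA hB hAB) (h1 ha)) (h2 ha)
    have hbind : partSW v (π.bind (fun C _ => Q C))
        = ∑ C ∈ π.parts.attach, partSW v (Q C.1) := by
      rw [partSW]
      rw [Finpartition.bind]
      exact Finset.sum_biUnion hdisjparts
    rw [hbind]
    have : partSW v π = ∑ C ∈ π.parts.attach, coalSW v C.1 := by
      rw [partSW, Finset.sum_attach]
    rw [this, Finset.mul_sum]
    exact Finset.sum_le_sum fun C _ => hQsw C.1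
end

section
/- Let β be a real number with β > 1/(3 + 2·√2). Then there exists no sequence of real numbers (x_i)_{i≥1} satisfying x_1 = 1, x_i ≥ 0 for all i ≥ 2, and, for all i ≥ 1, x_i ≥ β·(x_{i+1} + Σ_{j=1}^{i+1} x_j). -/
open Finset

/-- For `β > 1/(3 + 2√2)` there is no sequence `(x_i)_{i ≥ 1}` with `x_1 = 1`,
`x_i ≥ 0` for `i ≥ 2`, and `x_i ≥ β·(x_{i+1} + Σ_{j=1}^{i+1} x_j)` for all `i ≥ 1`. -/
theorem stmt2 (β : ℝ) (hβ : β > 1 / (3 + 2 * Real.sqrt 2)) :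
    ¬ ∃ x : ℕ → ℝ, x 1 = 1 ∧ (∀ i, 2 ≤ i → 0 ≤ x i) ∧
      ∀ i, 1 ≤ i → x i ≥ β * (x (i + 1) + ∑ j ∈ Finset.Icc 1 (i + 1), x j) := by
  have hs2 : Real.sqrt 2 ^ 2 = 2 := Real.sq_sqrt (by norm_num)
  have hs2gt : 1 < Real.sqrt 2 := by nlinarith [Real.sqrt_nonneg 2]
  have hs2lt : Real.sqrt 2 < 3/2 := by nlinarith [Real.sqrt_nonneg 2]
  have hβ' : 3 - 2 * Real.sqrt 2 < β := by
    have h1 : (0:ℝ) < 3 + 2 * Real.sqrt 2 := by nlinarith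
    have h2 : 1 / (3 + 2 * Real.sqrt 2) = 3 - 2 * Real.sqrt 2 := by
      rw [div_eq_iff (ne_of_gt h1)]; nlinarith
    rw [gt_iff_lt, h2] at hβ; exact hβ
  have hβpos : 0 < β := by nlinarith
  rintro ⟨x, hx1, hxnn, hrec⟩
  set S : ℕ → ℝ := fun n => ∑ j ∈ Icc 1 n, x j with hSdef
  have hSstep : ∀ n : ℕ, S (n+1) = S n + x (n+1) := by
    intro n
    simp only [hSdef]
    rw [Finset.sum_Icc_succ_top (Nat.succ_le_succ (Nat.zero_le n))]
  have hS1 : S 1 = 1 := by simp [hSdef, hx1]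
  have hxpos : ∀ n, 1 ≤ n → 0 ≤ x n := by
    intro n hn
    rcases eq_or_lt_of_le hn with h | h
    · rw [← h, hx1]; norm_num
    · exact hxnn n h
  have hSge1' : ∀ n : ℕ, 1 ≤ S (n+1) := by
    intro n
    induction n with
    | zero => rw [hS1]
    | succ m ih =>
      rw [hSstep (m+1)]
      have := hxpos (m+2) (by omega)
      linarith
  have hSge : ∀ n, 1 ≤ n → 1 ≤ S n := by
    intro n hn
    cases n with
    | zero => omega
    | succ m => exact hSge1' m
  have hSmono : ∀ n : ℕ, S n ≤ S (n+1) := by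
    intro n
    rw [hSstep n]
    have := hxpos (n+1) (by omega)
    linarith
  -- β ≤ 1
  have hβle1 : β ≤ 1 := by
    have h := hrec 1 le_rfl
    have hsum : ∑ j ∈ Finset.Icc 1 2, x j = x 1 + x 2 := by
      show ∑ j ∈ Finset.Icc 1 2, x j = x 1 + x 2
      rw [show Finset.Icc 1 2 = {1, 2} by decide]
      simp
    rw [hsum, hx1] at h
    have hx2 := hxnn 2 le_rfl
    nlinarith
  -- the key quadratic inequality constant
  set ε : ℝ := (6*β - 1 - β^2)/(8*β) with hεdef
  have hε8 : 8*β*ε = 6*β - 1 - β^2 := by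
    rw [hεdef]; field_simp
  have hεpos : 0 < ε := by
    rw [hεdef]
    apply div_pos _ (by linarith)
    nlinarith
  -- the recurrence in terms of S
  have hq : ∀ m, 1 ≤ m → 2*β*S (m+2) ≤ (1+β)*S (m+1) - S m := by
    intro m hm
    have h := hrec (m+1) (by omega)
    have e1 := hSstep (m+1)
    have e2 := hSstep m
    have : x (m+1) ≥ β * (x (m+2) + S (m+2)) := h
    nlinarith [this, e1, e2]
  set r : ℕ → ℝ := fun n => S (n+1) / S n with hrdef
  have hrge1 : ∀ n, 1 ≤ n → 1 ≤ r n := by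
    intro n hn
    have h1 : (0:ℝ) < S n := by linarith [hSge n hn]
    simp only [hrdef]
    rw [le_div_iff₀ h1]
    linarith [hSmono n]
  have hkey : ∀ m, 1 ≤ m → r (m+1) ≤ r m - ε/(2*β*r m) := by
    intro m hm
    have ha : (1:ℝ) ≤ S m := hSge m hm
    have hb : (1:ℝ) ≤ S (m+1) := hSge1' m
    have hab : S m ≤ S (m+1) := hSmono m
    have hqq := hq m hm
    set a := S m
    set b := S (m+1)
    set c := S (m+2)
    have ha0 : (0:ℝ) < a := by linarith
    have hb0 : (0:ℝ) < b := by linarith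
    have e : ε/(2*β*(b/a)) = ε*a/(2*β*b) := by
      field_simp
    have hpoly8 : 16*β^2*a*c ≤ 16*β^2*b*b - (8*β*ε)*a*a := by
      rw [hε8]
      nlinarith [sq_nonneg (4*β*b - (1+β)*a), mul_le_mul_of_nonneg_left hqq ha0.le, hβpos]
    have hpoly : 2*β*a*c ≤ 2*β*b*b - ε*a*a := by nlinarith [hpoly8, hβpos]
    have hid : b/a - ε*a/(2*β*b) - c/b = (2*β*b*b - ε*a*a - 2*β*a*c)/(2*β*a*b) := by
      field_simp
    have hnum : 0 ≤ (2*β*b*b - ε*a*a - 2*β*a*c)/(2*β*a*b) :=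
      div_nonneg (by linarith) (by positivity)
    show c/b ≤ b/a - ε/(2*β*(b/a))
    rw [e]
    linarith [hid ▸ hnum]
  have hmono : ∀ m, 1 ≤ m → r (m+1) ≤ r m := by
    intro m hm
    have h1 := hkey m hm
    have h2 : 0 < ε/(2*β*r m) := by
      apply div_pos hεpos
      have := hrge1 m hm
      positivity
    linarith
  have hle_r1 : ∀ k : ℕ, r (1+k) ≤ r 1 := by
    intro k
    induction k with
    | zero => simp
    | succ n ih =>
      have := hmono (1+n) (by omega)
      have e : 1 + (n+1) = (1+n) + 1 := by omega
      rw [e]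
      linarith
  have hr1pos : 0 < r 1 := by linarith [hrge1 1 le_rfl]
  set δ : ℝ := ε/(2*β*r 1) with hδdef
  have hδpos : 0 < δ := by
    rw [hδdef]; positivity
  have hstep : ∀ k : ℕ, r (1+(k+1)) ≤ r (1+k) - δ := by
    intro k
    have h1 := hkey (1+k) (by omega)
    have h2 : δ ≤ ε/(2*β*r (1+k)) := by
      rw [hδdef]
      have hrk : 0 < r (1+k) := by linarith [hrge1 (1+k) (by omega)]
      gcongr
      exact hle_r1 k
    have e : 1 + (k+1) = (1+k) + 1 := by omega
    rw [e]
    linarith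
  have hsum : ∀ k : ℕ, r (1+k) ≤ r 1 - k*δ := by
    intro k
    induction k with
    | zero => simp
    | succ n ih =>
      have := hstep n
      push_cast
      push_cast at ih
      linarith
  obtain ⟨k, hk⟩ := exists_nat_gt ((r 1 - 1)/δ)
  have hk' : r 1 - 1 < k * δ := by
    rw [div_lt_iff₀ hδpos] at hk
    linarith
  have h1 := hsum k
  have h2 := hrge1 (1+k) (by omega)
  linarith
end

section
/- Let k ≥ 2 be an integer and let h : ℕ → ℝ be a function such that h(2) > 1/3 and, for every integer m with 3 ≤ m ≤ k, h(m) ≥ 1/3 + (1/m)·Σ_{i=0}^{m−3} (C(m−2, i)/C(m−1, i))·h(m−1−i), where C(n, r) denotes the binomial coefficient. Then h(k) > 2/3 − 2/(3k). -/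
open Finset

lemma sum_aux6 (n : ℕ) : ∑ i ∈ Finset.range n, ((n:ℝ) - i) = n*(n+1)/2 := by
  induction n with
  | zero => simp
  | succ n ih =>
    rw [Finset.sum_range_succ]
    have : ∀ i ∈ Finset.range n, ((n:ℝ)+1 - i) = ((n:ℝ) - i) + 1 := fun i _ => by ring
    push_cast
    rw [Finset.sum_congr rfl this, Finset.sum_add_distrib, ih]
    simp
    ring

/-- The combinatorial induction behind the star lower bound: if `h 2 > 1/3` and for
every `3 ≤ m ≤ k` we have
`h m ≥ 1/3 + (1/m)·Σ_{i=0}^{m−3} (C(m−2,i)/C(m−1,i))·h(m−1−i)`,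
then `h k > 2/3 − 2/(3k)`. -/
theorem stmt6 (k : ℕ) (hk : 2 ≤ k) (h : ℕ → ℝ) (h2 : h 2 > 1/3)
    (hrec : ∀ m, 3 ≤ m → m ≤ k →
      h m ≥ 1/3 + (1/(m : ℝ)) * ∑ i ∈ Finset.range (m - 2),
        (((m - 2).choose i : ℝ) / ((m - 1).choose i : ℝ)) * h (m - 1 - i)) :
    h k > 2/3 - 2/(3 * (k : ℝ)) := by
  suffices H : ∀ m, 2 ≤ m → m ≤ k → h m > 2/3 - 2/(3*(m:ℝ)) from H k hk le_rfl
  intro m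
  induction m using Nat.strong_induction_on with
  | _ m ih =>
  intro hm2 hmk
  rcases eq_or_lt_of_le hm2 with he | hm3
  · rw [← he]; norm_num; linarith
  · obtain ⟨n, rfl⟩ : ∃ n, m = n + 2 := ⟨m - 2, by omega⟩
    have hn : 1 ≤ n := by omega
    have hrec' := hrec (n+2) (by omega) hmk
    have hsimp1 : n + 2 - 2 = n := by omega
    have hsimp2 : n + 2 - 1 = n + 1 := by omega
    rw [hsimp1] at hrec'
    simp only [hsimp2] at hrec'
    have key : ∀ i ∈ Finset.range n, 2*((n:ℝ)-i)/(3*((n:ℝ)+1)) <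
        ((n.choose i : ℝ)/((n+1).choose i : ℝ)) * h (n+1-i) := by
      intro i hi
      rw [Finset.mem_range] at hi
      have hilt : (i:ℝ) < n := by exact_mod_cast hi
      have hih := ih (n+1-i) (by omega) (by omega) (by omega)
      have hc : ((n+1-i:ℕ):ℝ) = (n:ℝ)+1-(i:ℝ) := by
        push_cast [Nat.cast_sub (by omega : i ≤ n+1)]; ring
      rw [hc] at hih
      have h1 : (0:ℝ) < ((n+1).choose i : ℝ) := by
        exact_mod_cast Nat.choose_pos (by omega : i ≤ n+1)
      have hratio : ((n.choose i : ℝ)/((n+1).choose i : ℝ)) = ((n:ℝ)+1-i)/((n:ℝ)+1) := by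
        rw [div_eq_div_iff h1.ne' (by positivity)]
        have hnat := Nat.choose_mul_succ_eq n i
        have : ((n.choose i * (n+1) : ℕ) : ℝ) = (((n+1).choose i * (n+1-i) : ℕ):ℝ) := by
          exact_mod_cast hnat
        push_cast [Nat.cast_sub (by omega : i ≤ n+1)] at this
        linarith [this]
      rw [hratio]
      have hcoefpos : (0:ℝ) < ((n:ℝ)+1-i)/((n:ℝ)+1) := by
        apply div_pos <;> linarith
      calc 2*((n:ℝ)-i)/(3*((n:ℝ)+1))
          = ((n:ℝ)+1-i)/((n:ℝ)+1) * (2/3 - 2/(3*((n:ℝ)+1-(i:ℝ)))) := by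
            have h0 : (n:ℝ)+1-(i:ℝ) ≠ 0 := by linarith
            field_simp
            ring
        _ < ((n:ℝ)+1-i)/((n:ℝ)+1) * h (n+1-i) := by
            exact mul_lt_mul_of_pos_left hih hcoefpos
    have hsum : ∑ i ∈ Finset.range n, 2*((n:ℝ)-i)/(3*((n:ℝ)+1)) = (n:ℝ)/3 := by
      have hrw : ∀ i ∈ Finset.range n, 2*((n:ℝ)-i)/(3*((n:ℝ)+1))
          = (2/(3*((n:ℝ)+1))) * ((n:ℝ)-i) := fun i _ => by ring
      rw [Finset.sum_congr rfl hrw, ← Finset.mul_sum, sum_aux6]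
      have : (0:ℝ) < (n:ℝ)+1 := by positivity
      field_simp
    have hS : (n:ℝ)/3 < ∑ i ∈ Finset.range n,
        ((n.choose i : ℝ)/((n+1).choose i : ℝ)) * h (n+1-i) := by
      rw [← hsum]
      exact Finset.sum_lt_sum_of_nonempty (Finset.nonempty_range_iff.mpr (by omega)) key
    have hp : (0:ℝ) < ((n:ℝ)+2) := by positivity
    have hmul := mul_lt_mul_of_pos_left hS (by positivity : (0:ℝ) < 1/((n:ℝ)+2))
    have hc2 : ((n+2:ℕ):ℝ) = (n:ℝ)+2 := by push_cast; ring
    rw [hc2] at hrec'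
    have hgoal : 2/3 - 2/(3*((n:ℝ)+2)) = 1/3 + (1/((n:ℝ)+2)) * ((n:ℝ)/3) := by
      field_simp
      ring
    have : h (n+2) > 2/3 - 2/(3*((n:ℝ)+2)) := by
      rw [hgoal]; linarith
    calc 2/3 - 2/(3*((n+2:ℕ):ℝ)) = 2/3 - 2/(3*((n:ℝ)+2)) := by rw [hc2]
      _ < h (n+2) := this
end

section
/- Let I and J be finite sets of natural numbers with I ∪ J nonempty and t = max(I ∪ J), let ε be a real number with 0 < ε < 1, let c ∈ ℝ, and let p, q : ℕ → ℝ and r ∈ ℝ satisfy: p i ≥ 0 for i ∈ I, q j ≥ 0 for j ∈ J, r ≥ 0, Σ_{i∈I} p i + r ≤ 1, and Σ_{j∈J} q j + r ≤ 1. If c·(1/ε)^{t+1} ≤ Σ_{i∈I} p i·(1/ε)^i + Σ_{j∈J} q j·(1/ε)^j + r·(1/ε)^{t+1}, then r ≥ c − 2ε. -/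
open Finset

/-- Bi-star instance computation: if `I ∪ J` is a nonempty finite set of naturals with
maximum element `t`, `0 < ε < 1`, the probabilities `p i`, `q j`, `r` are nonnegative
with `Σ_{i∈I} p i + r ≤ 1` and `Σ_{j∈J} q j + r ≤ 1`, and
`c·(1/ε)^{t+1} ≤ Σ_{i∈I} p i·(1/ε)^i + Σ_{j∈J} q j·(1/ε)^j + r·(1/ε)^{t+1}`,
then `r ≥ c − 2ε`. -/
theorem stmt8 (I J : Finset ℕ) (hIJ : (I ∪ J).Nonempty) (t : ℕ) (htIJ : t ∈ I ∪ J)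
    (htmax : ∀ k ∈ I ∪ J, k ≤ t)
    (ε : ℝ) (hε0 : 0 < ε) (hε1 : ε < 1) (c : ℝ)
    (p q : ℕ → ℝ) (r : ℝ)
    (hp : ∀ i ∈ I, 0 ≤ p i) (hq : ∀ j ∈ J, 0 ≤ q j) (hr : 0 ≤ r)
    (hps : ∑ i ∈ I, p i + r ≤ 1) (hqs : ∑ j ∈ J, q j + r ≤ 1)
    (hc : c * (1/ε)^(t+1) ≤
      ∑ i ∈ I, p i * (1/ε)^i + ∑ j ∈ J, q j * (1/ε)^j + r * (1/ε)^(t+1)) :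
    r ≥ c - 2*ε := by
  set e : ℝ := 1/ε with he
  have he1 : 1 ≤ e := by
    rw [he]; rw [le_div_iff₀ hε0]; linarith
  have het : (0:ℝ) < e ^ t := pow_pos (by linarith) t
  have hP : ∑ i ∈ I, p i * e ^ i ≤ e ^ t := by
    calc ∑ i ∈ I, p i * e ^ i ≤ ∑ i ∈ I, p i * e ^ t := by
          refine Finset.sum_le_sum fun i hi => ?_
          exact mul_le_mul_of_nonneg_left
            (pow_le_pow_right₀ he1 (htmax i (Finset.mem_union_left _ hi))) (hp i hi)
      _ = (∑ i ∈ I, p i) * e ^ t := by rw [Finset.sum_mul]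
      _ ≤ 1 * e ^ t := by
          apply mul_le_mul_of_nonneg_right _ het.le
          linarith
      _ = e ^ t := one_mul _
  have hQ : ∑ j ∈ J, q j * e ^ j ≤ e ^ t := by
    calc ∑ j ∈ J, q j * e ^ j ≤ ∑ j ∈ J, q j * e ^ t := by
          refine Finset.sum_le_sum fun j hj => ?_
          exact mul_le_mul_of_nonneg_left
            (pow_le_pow_right₀ he1 (htmax j (Finset.mem_union_right _ hj))) (hq j hj)
      _ = (∑ j ∈ J, q j) * e ^ t := by rw [Finset.sum_mul]
      _ ≤ 1 * e ^ t := by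
          apply mul_le_mul_of_nonneg_right _ het.le
          linarith
      _ = e ^ t := one_mul _
  have key : c * (e ^ t * e) ≤ 2 * e ^ t + r * (e ^ t * e) := by
    have := hc
    rw [pow_succ] at this
    linarith
  have hεe : ε * e = 1 := by
    rw [he]; field_simp
  have key2 : c * e ^ t ≤ 2 * ε * e ^ t + r * e ^ t := by
    have := mul_le_mul_of_nonneg_left key hε0.le
    nlinarith
  nlinarith
end

section
/- Let N be a finite set with n elements, let b ∈ N, let I ⊆ N \ {b}, and let m be a natural number with m ≤ |I| + 1. For a uniformly random bijection σ : {1, …, n} → N (the arrival order), the probability that fewer than m elements of I arrive before b, i.e., P(|{i ∈ I : σ⁻¹(i) < σ⁻¹(b)}| < m), equals m/(|I| + 1). -/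
open Finset

/-- The number of elements of `s` smaller than the `i`-th element of `s` is `i`. -/
lemma aux_card_filter_lt_orderEmbOfFin {β : Type*} [LinearOrder β] [DecidableEq β]
    (s : Finset β) {k : ℕ} (h : s.card = k) (i : Fin k) :
    (s.filter (fun x => x < s.orderEmbOfFin h i)).card = i := by
  have himg : s.filter (fun x => x < s.orderEmbOfFin h i)
      = (Finset.Iio i).image (s.orderEmbOfFin h) := by
    ext x
    simp only [mem_filter, mem_image, mem_Iio]
    constructor
    · rintro ⟨hxs, hlt⟩
      have hx : x ∈ Set.range (s.orderEmbOfFin h) := by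
        rw [range_orderEmbOfFin]; exact hxs
      obtain ⟨j, rfl⟩ := hx
      exact ⟨j, (s.orderEmbOfFin h).strictMono.lt_iff_lt.mp hlt, rfl⟩
    · rintro ⟨j, hj, rfl⟩
      exact ⟨orderEmbOfFin_mem _ _ _, (s.orderEmbOfFin h).strictMono hj⟩
  rw [himg, card_image_of_injective _ (s.orderEmbOfFin h).injective, Fin.card_Iio]

lemma aux_orderEmbOfFin_congr {β : Type*} [LinearOrder β] {s t : Finset β} (hst : s = t)
    {k : ℕ} (h : s.card = k) (h' : t.card = k) (i : Fin k) :
    s.orderEmbOfFin h i = t.orderEmbOfFin h' i := by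
  subst hst; rfl

/-- All fibers of the rank of `b` among `insert b I` have the same cardinality. -/
lemma aux_fiber_card_eq {α : Type*} [Fintype α] [DecidableEq α] (b : α) (I : Finset α)
    (hbI : b ∉ I) (k j : Fin (I.card + 1)) :
    (Finset.univ.filter (fun σ : Fin (Fintype.card α) ≃ α =>
        (I.filter (fun i => σ.symm i < σ.symm b)).card = (k : ℕ))).card =
    (Finset.univ.filter (fun σ : Fin (Fintype.card α) ≃ α =>
        (I.filter (fun i => σ.symm i < σ.symm b)).card = (j : ℕ))).card := by
  classical
  set n := Fintype.card α with hn
  -- positions occupied by `insert b I`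
  set P : (Fin n ≃ α) → Finset (Fin n) :=
    fun σ => (insert b I).image σ.symm with hPdef
  have hP : ∀ σ : Fin n ≃ α, (P σ).card = I.card + 1 := by
    intro σ
    rw [hPdef]
    rw [card_image_of_injective _ (Equiv.injective _), card_insert_of_notMem hbI]
  have hbP : ∀ σ : Fin n ≃ α, σ.symm b ∈ P σ := fun σ =>
    mem_image_of_mem _ (mem_insert_self b I)
  -- the rank as count over positions
  have hrk : ∀ σ : Fin n ≃ α,
      ((P σ).filter (fun x => x < σ.symm b)).card
        = (I.filter (fun i => σ.symm i < σ.symm b)).card := by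
    intro σ
    rw [hPdef]
    rw [filter_image, filter_insert, if_neg (lt_irrefl _),
      card_image_of_injective _ (Equiv.injective _)]
  -- the swapping map
  set F : Fin (I.card + 1) → (Fin n ≃ α) → (Fin n ≃ α) :=
    fun j σ => (Equiv.swap (σ.symm b) ((P σ).orderEmbOfFin (hP σ) j)).trans σ with hFdef
  have hFsymm : ∀ (j : Fin (I.card + 1)) (σ : Fin n ≃ α) (x : α),
      (F j σ).symm x = Equiv.swap (σ.symm b) ((P σ).orderEmbOfFin (hP σ) j) (σ.symm x) := by
    intro j σ x
    simp [hFdef, Equiv.swap_apply_self]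
  have hFsymmb : ∀ (j : Fin (I.card + 1)) (σ : Fin n ≃ α),
      (F j σ).symm b = (P σ).orderEmbOfFin (hP σ) j := by
    intro j σ
    rw [hFsymm, Equiv.swap_apply_left]
  -- positions are preserved
  have hPF : ∀ (j : Fin (I.card + 1)) (σ : Fin n ≃ α), P (F j σ) = P σ := by
    intro j σ
    set p := σ.symm b
    set q := (P σ).orderEmbOfFin (hP σ) j with hq
    have hqP : q ∈ P σ := orderEmbOfFin_mem _ _ _
    have h1 : P (F j σ) = (P σ).image (Equiv.swap p q) := by
      rw [hPdef]
      dsimp only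
      rw [image_image]
      exact Finset.image_congr fun x _ => hFsymm j σ x
    rw [h1]
    apply Finset.eq_of_subset_of_card_le
    · intro x hx
      obtain ⟨y, hy, rfl⟩ := mem_image.mp hx
      rcases eq_or_ne y p with rfl | hyp
      · rw [Equiv.swap_apply_left]; exact hqP
      rcases eq_or_ne y q with rfl | hyq
      · rw [Equiv.swap_apply_right]; exact hbP σ
      · rwa [Equiv.swap_apply_of_ne_of_ne hyp hyq]
    · have h2 := card_image_of_injective (P σ) (Equiv.injective (Equiv.swap p q))
      rw [h2, hP σ]
  -- rank of image is `j`
  have hrkF : ∀ (j : Fin (I.card + 1)) (σ : Fin n ≃ α),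
      (I.filter (fun i => (F j σ).symm i < (F j σ).symm b)).card = (j : ℕ) := by
    intro j σ
    rw [← hrk]
    have hPeq := hPF j σ
    rw [hFsymmb j σ]
    calc ((P (F j σ)).filter (fun x => x < (P σ).orderEmbOfFin (hP σ) j)).card
        = ((P σ).filter (fun x => x < (P σ).orderEmbOfFin (hP σ) j)).card := by rw [hPeq]
      _ = (j : ℕ) := aux_card_filter_lt_orderEmbOfFin _ _ _
  -- identify the position of `b` when the rank is known
  have hpos : ∀ (σ : Fin n ≃ α) (k : Fin (I.card + 1)),
      (I.filter (fun i => σ.symm i < σ.symm b)).card = (k : ℕ) →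
      σ.symm b = (P σ).orderEmbOfFin (hP σ) k := by
    intro σ k hk
    have hb : σ.symm b ∈ Set.range ((P σ).orderEmbOfFin (hP σ)) := by
      rw [range_orderEmbOfFin]; exact hbP σ
    obtain ⟨i, hi⟩ := hb
    have : (i : ℕ) = (k : ℕ) := by
      rw [← aux_card_filter_lt_orderEmbOfFin (P σ) (hP σ) i, hi, hrk, hk]
    rw [← hi, Fin.ext this]
  -- `F k` inverts `F j` on the fiber of `k`
  have hFF : ∀ (k j : Fin (I.card + 1)) (σ : Fin n ≃ α),
      (I.filter (fun i => σ.symm i < σ.symm b)).card = (k : ℕ) →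
      F k (F j σ) = σ := by
    intro k j σ hk
    set p := σ.symm b with hp
    set q := (P σ).orderEmbOfFin (hP σ) j with hq
    have h1 : (F j σ).symm b = q := hFsymmb j σ
    have h2 : (P (F j σ)).orderEmbOfFin (hP (F j σ)) k = p := by
      rw [aux_orderEmbOfFin_congr (hPF j σ) (hP (F j σ)) (hP σ) k]
      exact (hpos σ k hk).symm
    have h3 : F k (F j σ) = (Equiv.swap ((F j σ).symm b)
        ((P (F j σ)).orderEmbOfFin (hP (F j σ)) k)).trans (F j σ) := rfl
    rw [h3, h1, h2]
    have h4 : ∀ y, (F j σ) y = σ (Equiv.swap p q y) := fun y => rfl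
    ext x
    rw [Equiv.trans_apply, h4, Equiv.swap_comm q p, Equiv.swap_apply_self]
  -- now the bijection
  apply Finset.card_nbij' (F j) (F k)
  · intro σ hσ
    simp only [mem_coe, mem_filter, mem_univ, true_and]
    exact hrkF j σ
  · intro σ hσ
    simp only [mem_coe, mem_filter, mem_univ, true_and]
    exact hrkF k σ
  · intro σ hσ
    simp only [mem_coe, mem_filter, mem_univ, true_and] at hσ
    exact hFF k j σ hσ
  · intro σ hσ
    simp only [mem_coe, mem_filter, mem_univ, true_and] at hσ
    exact hFF j k σ hσ

/-- Random arrival computation: let the agent set be a finite type `α` with `n`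
elements, `b` an agent, `I` a finite set of agents not containing `b`, and
`m ≤ |I| + 1`.  For a uniformly random arrival order (a bijection
`σ : Fin n ≃ α`, with `σ.symm x` the arrival position of `x`), the probability that
fewer than `m` elements of `I` arrive before `b` equals `m/(|I| + 1)`. -/
theorem stmt9 {α : Type*} [Fintype α] [DecidableEq α] (b : α) (I : Finset α)
    (hbI : b ∉ I) (m : ℕ) (hm : m ≤ I.card + 1) :
    ((Finset.univ.filter (fun σ : Fin (Fintype.card α) ≃ α =>
        (I.filter (fun i => σ.symm i < σ.symm b)).card < m)).card : ℝ) /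
      ((Finset.univ : Finset (Fin (Fintype.card α) ≃ α)).card : ℝ) =
    (m : ℝ) / ((I.card : ℝ) + 1) := by
  classical
  set n := Fintype.card α with hn
  set c := I.card with hc
  set A0 := (Finset.univ.filter (fun σ : Fin n ≃ α =>
      (I.filter (fun i => σ.symm i < σ.symm b)).card = 0)).card with hA0
  have hfiber : ∀ k : ℕ, k < c + 1 →
      (Finset.univ.filter (fun σ : Fin n ≃ α =>
        (I.filter (fun i => σ.symm i < σ.symm b)).card = k)).card = A0 :=
    fun k hk => aux_fiber_card_eq b I hbI ⟨k, hk⟩ ⟨0, c.succ_pos⟩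
  have hrk_lt : ∀ σ : Fin n ≃ α,
      (I.filter (fun i => σ.symm i < σ.symm b)).card < c + 1 :=
    fun σ => Nat.lt_succ_of_le (card_filter_le _ _)
  have htotal : (Finset.univ : Finset (Fin n ≃ α)).card = (c + 1) * A0 := by
    rw [Finset.card_eq_sum_card_fiberwise
      (f := fun σ : Fin n ≃ α => (I.filter (fun i => σ.symm i < σ.symm b)).card)
      (t := Finset.range (c + 1)) (fun σ _ => mem_range.mpr (hrk_lt σ))]
    rw [Finset.sum_congr rfl fun k hk => hfiber k (mem_range.mp hk),
      Finset.sum_const, Finset.card_range, smul_eq_mul]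
  have hevent : (Finset.univ.filter (fun σ : Fin n ≃ α =>
      (I.filter (fun i => σ.symm i < σ.symm b)).card < m)).card = m * A0 := by
    rw [Finset.card_eq_sum_card_fiberwise
      (f := fun σ : Fin n ≃ α => (I.filter (fun i => σ.symm i < σ.symm b)).card)
      (t := Finset.range m) (fun σ hσ => mem_range.mpr (mem_filter.mp hσ).2)]
    refine (Finset.sum_congr rfl fun k hk => ?_).trans
      (by rw [Finset.sum_const, Finset.card_range, smul_eq_mul])
    have hkm := mem_range.mp hk
    have heq : (Finset.univ.filter (fun σ : Fin n ≃ α =>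
        (I.filter (fun i => σ.symm i < σ.symm b)).card < m)).filter
          (fun σ => (I.filter (fun i => σ.symm i < σ.symm b)).card = k)
        = Finset.univ.filter (fun σ : Fin n ≃ α =>
        (I.filter (fun i => σ.symm i < σ.symm b)).card = k) := by
      ext σ
      simp only [mem_filter, mem_univ, true_and]
      constructor
      · rintro ⟨_, h⟩; exact h
      · intro h; exact ⟨h ▸ hkm, h⟩
    exact (congrArg Finset.card heq).trans (hfiber k (lt_of_lt_of_le hkm hm))
  have hApos : A0 ≠ 0 := by
    intro h0
    have h1 : (Finset.univ : Finset (Fin n ≃ α)).card = 0 := by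
      rw [htotal, h0, mul_zero]
    have hne : Nonempty (Fin n ≃ α) := ⟨(Fintype.equivFin α).symm⟩
    rw [Finset.card_univ] at h1
    exact Fintype.card_ne_zero h1
  have hA0R : (A0 : ℝ) ≠ 0 := Nat.cast_ne_zero.mpr hApos
  rw [hevent, htotal]
  push_cast
  rw [mul_div_mul_right _ _ hA0R]
end

section
/- Let N be a finite set with a symmetric valuation v. Suppose that the simple graph on N whose edges are the pairs {i, j} with v i j > 0 is acyclic (a forest), and that for every pair of distinct i, j with v i j ≤ 0 it holds that v i j < −Σ_{{k,l} : v k l > 0} v k l (the negative valuations are smaller than the negative of the total sum of positive valuations over unordered pairs). Then every coalition C ⊆ N with |C| ≥ 3 satisfies SW(C) < 0. -/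
open Finset

lemma triangle_cycle' {α : Type*} {G : SimpleGraph α} {a b c : α}
    (hab : G.Adj a b) (hbc : G.Adj b c) (hca : G.Adj c a) :
    ((SimpleGraph.Walk.nil.cons hca).cons hbc |>.cons hab).IsCycle := by
  have hac : a ≠ c := fun h => by subst h; exact G.loopless.irrefl a hca
  simp [SimpleGraph.Walk.isCycle_def, SimpleGraph.Walk.isTrail_def, hab.ne, hbc.ne, hca.ne,
    hac, hab.ne.symm, hbc.ne.symm, hca.ne.symm, hac.symm, Sym2.eq_iff]

open scoped Classical in
/-- Tree domain: if the simple graph of positive valuations is acyclic (a forest) and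
every nonpositive valuation between distinct agents is smaller than the negative of the
total sum of positive valuations over unordered pairs (written as half the sum over
ordered pairs, which is the same for a symmetric valuation), then every coalition with
at least 3 agents has negative social welfare. -/
theorem stmt10 {α : Type*} [Fintype α] [DecidableEq α] (v : α → α → ℝ)
    (hsymm : ∀ i j, v i j = v j i) (hdiag : ∀ i, v i i = 0)
    (hacyc : (SimpleGraph.fromRel fun i j => 0 < v i j).IsAcyclic)
    (hneg : ∀ i j, i ≠ j → v i j ≤ 0 →
      v i j < -((∑ p ∈ Finset.univ.offDiag.filter
          (fun p : α × α => 0 < v p.1 p.2), v p.1 p.2) / 2))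
    (C : Finset α) (hC : 3 ≤ C.card) :
    coalSW v C < 0 := by
  set T : ℝ := ∑ p ∈ Finset.univ.offDiag.filter (fun p : α × α => 0 < v p.1 p.2), v p.1 p.2
    with hT
  -- T is nonnegative
  have hTnonneg : 0 ≤ T := Finset.sum_nonneg fun p hp => le_of_lt (Finset.mem_filter.mp hp).2
  have hcard : (0 : ℝ) < C.card := by positivity
  rw [coalSW, div_neg_iff]
  right
  refine ⟨?_, hcard⟩
  -- rewrite the double sum as a sum over offDiag
  have key : ∑ i ∈ C, ∑ j ∈ C.erase i, v i j = ∑ p ∈ C.offDiag, v p.1 p.2 := by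
    rw [show C.offDiag = (C ×ˢ C).filter (fun a => a.1 ≠ a.2) from by
      ext p; simp [Finset.mem_offDiag, and_assoc], Finset.sum_filter, Finset.sum_product]
    refine Finset.sum_congr rfl fun i hi => ?_
    rw [← Finset.sum_filter]
    congr 1
    exact (Finset.filter_ne C i).symm
  rw [key]
  -- find a nonpositive pair in C
  obtain ⟨a, ha, b, hb, c, hc, hab, hac, hbc⟩ : ∃ a ∈ C, ∃ b ∈ C, ∃ c ∈ C,
      a ≠ b ∧ a ≠ c ∧ b ≠ c := by
    have h2 : 2 < C.card := hC
    rw [Finset.two_lt_card_iff] at h2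
    obtain ⟨a, b, c, ha, hb, hc, h1, h2, h3⟩ := h2
    exact ⟨a, ha, b, hb, c, hc, h1, h2, h3⟩
  have hex : ∃ x ∈ C, ∃ y ∈ C, x ≠ y ∧ v x y ≤ 0 := by
    by_contra h
    push_neg at h
    have hadj : ∀ x ∈ C, ∀ y ∈ C, x ≠ y →
        (SimpleGraph.fromRel fun i j => 0 < v i j).Adj x y := by
      intro x hx y hy hxy
      exact ⟨hxy, Or.inl (h x hx y hy hxy)⟩
    exact hacyc _ (triangle_cycle' (hadj a ha b hb hab) (hadj b hb c hc hbc)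
      (hadj c hc a ha hac.symm))
  obtain ⟨x, hx, y, hy, hxy, hvxy⟩ := hex
  have hvyx : v y x ≤ 0 := by rw [hsymm]; exact hvxy
  -- split the sum
  rw [← Finset.sum_filter_add_sum_filter_not C.offDiag (fun p => 0 < v p.1 p.2)]
  have hpos : ∑ p ∈ C.offDiag.filter (fun p => 0 < v p.1 p.2), v p.1 p.2 ≤ T := by
    apply Finset.sum_le_sum_of_subset_of_nonneg
    · intro p hp
      rw [Finset.mem_filter] at hp ⊢
      refine ⟨?_, hp.2⟩
      rw [Finset.mem_offDiag] at hp ⊢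
      exact ⟨Finset.mem_univ _, Finset.mem_univ _, hp.1.2.2⟩
    · intro p hp _
      exact le_of_lt (Finset.mem_filter.mp hp).2
  have hmemxy : (x, y) ∈ C.offDiag.filter (fun p => ¬ 0 < v p.1 p.2) := by
    simp [Finset.mem_offDiag, hx, hy, hxy, hvxy]
  have hmemyx : (y, x) ∈ C.offDiag.filter (fun p => ¬ 0 < v p.1 p.2) := by
    simp [Finset.mem_offDiag, hx, hy, hxy.symm, hvyx]
  have hnegsum : ∑ p ∈ C.offDiag.filter (fun p => ¬ 0 < v p.1 p.2), v p.1 p.2 < -T := by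
    have h2 : ∑ p ∈ ({(x, y), (y, x)} : Finset (α × α)), v p.1 p.2 < -T := by
      rw [Finset.sum_pair (by simp [hxy])]
      have h1 := hneg x y hxy hvxy
      have h2 := hneg y x hxy.symm hvyx
      show v x y + v y x < -T
      linarith
    refine lt_of_le_of_lt ?_ h2
    have hsub : ({(x, y), (y, x)} : Finset (α × α)) ⊆
        C.offDiag.filter (fun p => ¬ 0 < v p.1 p.2) := by
      intro p hp
      rcases Finset.mem_insert.mp hp with rfl | hp
      · exact hmemxy
      · rw [Finset.mem_singleton] at hp; subst hp; exact hmemyx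
    have h3 := Finset.sum_le_sum_of_subset_of_nonneg (f := fun p : α × α => -v p.1 p.2) hsub
      (fun p hp _ => neg_nonneg.mpr (le_of_not_gt (Finset.mem_filter.mp hp).2))
    simp only [Finset.sum_neg_distrib, neg_le_neg_iff] at h3
    exact h3
  linarith
end

section
/- Let N be a finite set with a symmetric valuation v, let a, b ∈ N be distinct, and let ε be a real number with 0 < ε ≤ 1/2. Suppose v a b ≥ 0, v i j ≤ 0 whenever {a, b} ∩ {i, j} = ∅, and v a d ≤ ε·(v a b) and v b d ≤ ε·(v a b) for every d ∈ N \ {a, b}. Then every matching μ of N satisfies SW(μ) ≤ v a b, and this bound is attained by the matching whose only two-element part is {a, b}. In other words, the maximum weight matching of a bi-star instance matches the two centers with each other. -/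
open Finset

/-- Maximum weight matchings in bi-star instances: with centers `a ≠ b`,
`v a b ≥ 0`, all valuations avoiding both centers nonpositive, and all leaf
valuations at most `ε·v a b` for some `0 < ε ≤ 1/2`, every matching of `N` has
social welfare at most `v a b`, and this is attained by a matching whose only
two-element part is `{a, b}`. -/
theorem stmt12 {α : Type*} [DecidableEq α] (N : Finset α) (v : α → α → ℝ)
    (hsymm : ∀ i j, v i j = v j i) (hdiag : ∀ i, v i i = 0)
    (a b : α) (ha : a ∈ N) (hb : b ∈ N) (hab : a ≠ b)
    (ε : ℝ) (hε0 : 0 < ε) (hε1 : ε ≤ 1/2)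
    (hvab : 0 ≤ v a b)
    (hneg : ∀ i ∈ N, ∀ j ∈ N, i ≠ a → i ≠ b → j ≠ a → j ≠ b → v i j ≤ 0)
    (hleafa : ∀ d ∈ N, d ≠ a → d ≠ b → v a d ≤ ε * v a b)
    (hleafb : ∀ d ∈ N, d ≠ a → d ≠ b → v b d ≤ ε * v a b) :
    (∀ μ : Finpartition N, IsMatching μ → partSW v μ ≤ v a b) ∧
    (∃ μ : Finpartition N, IsMatching μ ∧ ({a, b} : Finset α) ∈ μ.parts ∧
      (∀ p ∈ μ.parts, p.card = 2 → p = ({a, b} : Finset α)) ∧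
      partSW v μ = v a b) := by
  constructor
  · intro μ hμ
    -- classification of parts
    have hcases : ∀ p ∈ μ.parts, (∃ i, i ∈ N ∧ p = {i}) ∨
        (∃ i j, i ∈ N ∧ j ∈ N ∧ i ≠ j ∧ p = {i, j}) := by
      intro p hp
      have h1 : 1 ≤ p.card := Finset.card_pos.2 (μ.nonempty_of_mem_parts hp)
      have h2 := hμ p hp
      have hsub : p ⊆ N := μ.le hp
      interval_cases h : p.card
      · obtain ⟨i, hi⟩ := Finset.card_eq_one.1 h
        exact Or.inl ⟨i, hsub (hi ▸ Finset.mem_singleton_self i), hi⟩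
      · obtain ⟨i, j, hij, hij'⟩ := Finset.card_eq_two.1 h
        exact Or.inr ⟨i, j, hsub (hij' ▸ by simp), hsub (hij' ▸ by simp), hij, hij'⟩
    have hzero : ∀ p ∈ μ.parts, a ∉ p → b ∉ p → coalSW v p ≤ 0 := by
      intro p hp hap hbp
      rcases hcases p hp with ⟨i, hi, rfl⟩ | ⟨i, j, hi, hj, hij, rfl⟩
      · simp [coalSW_singleton]
      · rw [coalSW_pair v hsymm hij]
        simp only [Finset.mem_insert, Finset.mem_singleton] at hap hbp
        push_neg at hap hbp
        exact hneg i hi j hj (fun h => hap.1 h.symm) (fun h => hbp.1 h.symm)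
          (fun h => hap.2 h.symm) (fun h => hbp.2 h.symm)
    have hA : ∀ p ∈ μ.parts, a ∈ p → b ∉ p → coalSW v p ≤ ε * v a b := by
      intro p hp hap hbp
      rcases hcases p hp with ⟨i, hi, rfl⟩ | ⟨i, j, hi, hj, hij, rfl⟩
      · rw [coalSW_singleton]; positivity
      · rw [coalSW_pair v hsymm hij]
        simp only [Finset.mem_insert, Finset.mem_singleton] at hap hbp
        push_neg at hbp
        rcases hap with rfl | rfl
        · exact hleafa j hj (fun h => hij h.symm) hbp.2.symm
        · rw [hsymm]
          exact hleafa i hi (fun h => hij h) hbp.1.symm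
    have hB : ∀ p ∈ μ.parts, b ∈ p → a ∉ p → coalSW v p ≤ ε * v a b := by
      intro p hp hbp hap
      rcases hcases p hp with ⟨i, hi, rfl⟩ | ⟨i, j, hi, hj, hij, rfl⟩
      · rw [coalSW_singleton]; positivity
      · rw [coalSW_pair v hsymm hij]
        simp only [Finset.mem_insert, Finset.mem_singleton] at hap hbp
        push_neg at hap
        rcases hbp with rfl | rfl
        · exact hleafb j hj hap.2.symm (fun h => hij h.symm)
        · rw [hsymm]
          exact hleafb i hi hap.1.symm (fun h => hij h)
    obtain ⟨pa, hpa, hapa⟩ := μ.exists_mem ha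
    obtain ⟨pb, hpb, hbpb⟩ := μ.exists_mem hb
    by_cases hpp : pa = pb
    · -- a and b in the same part, which must be {a, b}
      subst hpp
      have hpab : pa = {a, b} := by
        refine (Finset.eq_of_subset_of_card_le ?_ ?_).symm
        · intro x hx
          simp only [Finset.mem_insert, Finset.mem_singleton] at hx
          rcases hx with rfl | rfl <;> assumption
        · simpa [Finset.card_insert_of_notMem, hab] using hμ pa hpa
      rw [partSW, ← Finset.add_sum_erase μ.parts _ hpa]
      have h1 : coalSW v pa = v a b := by rw [hpab, coalSW_pair v hsymm hab]
      have h2 : ∑ p ∈ μ.parts.erase pa, coalSW v p ≤ 0 := by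
        apply Finset.sum_nonpos
        intro p hp
        have hp' := Finset.mem_of_mem_erase hp
        have hne := Finset.ne_of_mem_erase hp
        refine hzero p hp' (fun h => hne ?_) (fun h => hne ?_)
        · exact μ.eq_of_mem_parts hp' hpa h hapa
        · exact μ.eq_of_mem_parts hp' hpa h hbpb
      linarith
    · -- a and b in different parts
      have hbpa : b ∉ pa := fun h => hpp (μ.eq_of_mem_parts hpa hpb h hbpb)
      have hapb : a ∉ pb := fun h => hpp (μ.eq_of_mem_parts hpa hpb hapa h)
      have hpbmem : pb ∈ μ.parts.erase pa := Finset.mem_erase.2 ⟨fun h => hpp h.symm, hpb⟩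
      rw [partSW, ← Finset.add_sum_erase μ.parts _ hpa,
        ← Finset.add_sum_erase _ _ hpbmem]
      have h1 : coalSW v pa ≤ ε * v a b := hA pa hpa hapa hbpa
      have h2 : coalSW v pb ≤ ε * v a b := hB pb hpb hbpb hapb
      have h3 : ∑ p ∈ (μ.parts.erase pa).erase pb, coalSW v p ≤ 0 := by
        apply Finset.sum_nonpos
        intro p hp
        have hp' := Finset.mem_of_mem_erase (Finset.mem_of_mem_erase hp)
        have hnea := Finset.ne_of_mem_erase (Finset.mem_of_mem_erase hp)
        have hneb := Finset.ne_of_mem_erase hp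
        refine hzero p hp' (fun h => hnea ?_) (fun h => hneb ?_)
        · exact μ.eq_of_mem_parts hp' hpa h hapa
        · exact μ.eq_of_mem_parts hp' hpb h hbpb
      nlinarith
  · -- the attaining matching
    have hABsub : ({a, b} : Finset α) ⊆ N := by
      intro x hx
      simp only [Finset.mem_insert, Finset.mem_singleton] at hx
      rcases hx with rfl | rfl <;> assumption
    have hne : ({a, b} : Finset α) ≠ ⊥ := by
      simp [Finset.bot_eq_empty, Finset.insert_ne_empty]
    have hdisj : Disjoint (N \ {a, b}) ({a, b} : Finset α) := Finset.sdiff_disjoint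
    have hsup : (N \ {a, b}) ⊔ ({a, b} : Finset α) = N := by
      rw [Finset.sup_eq_union, Finset.sdiff_union_of_subset hABsub]
    refine ⟨(⊥ : Finpartition (N \ {a, b})).extend hne hdisj hsup, ?_, ?_, ?_, ?_⟩
    · intro p hp
      rw [Finpartition.extend_parts, Finset.mem_insert] at hp
      rcases hp with rfl | hp
      · simp [Finset.card_insert_of_notMem, hab]
      · rw [Finpartition.mem_bot_iff] at hp
        obtain ⟨x, _, rfl⟩ := hp
        simp
    · rw [Finpartition.extend_parts]
      exact Finset.mem_insert_self _ _
    · intro p hp hcard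
      rw [Finpartition.extend_parts, Finset.mem_insert] at hp
      rcases hp with rfl | hp
      · rfl
      · rw [Finpartition.mem_bot_iff] at hp
        obtain ⟨x, _, rfl⟩ := hp
        simp at hcard
    · have hnotmem : ({a, b} : Finset α) ∉ (⊥ : Finpartition (N \ {a, b})).parts := by
        rw [Finpartition.mem_bot_iff]
        rintro ⟨x, _, hx⟩
        have : ({x} : Finset α).card = ({a, b} : Finset α).card := by rw [hx]
        rw [Finset.card_singleton, Finset.card_insert_of_notMem (by simp [hab]),
          Finset.card_singleton] at this
        omega
      rw [partSW, Finpartition.extend_parts, Finset.sum_insert hnotmem,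
        coalSW_pair v hsymm hab]
      have : ∑ C ∈ (⊥ : Finpartition (N \ {a, b})).parts, coalSW v C = 0 := by
        apply Finset.sum_eq_zero
        intro p hp
        rw [Finpartition.mem_bot_iff] at hp
        obtain ⟨x, _, rfl⟩ := hp
        exact coalSW_singleton v x
      rw [this, add_zero]
end
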